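/- Under assumptions A.1, A.2, A.3, for every bounded measurable f : S → ℝ and every arbitrarily small 0 < υ < 1/2 there exist a positive, almost surely finite random variable W_{f,υ} and a finite constant C, both independent of M and ε (one may take C = 2‖f‖_∞ / ∫_S h), such that almost surely, for every M ≥ 1, |(f, π^{M,ε}) − (f, π)| ≤ W_{f,υ} / M^{1/2 − υ} + C ε. -/

import Mathlib

open MeasureTheory ProbabilityTheory Finset

lemma exp_le_one_add_add_sq {x : ℝ} (hx : |x| ≤ 1) : Real.exp x ≤ 1 + x + x ^ 2 := by
  have h := Real.exp_bound hx (n := 2) (by norm_num)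
  have h2 : ∑ m ∈ range 2, x ^ m / (Nat.factorial m : ℝ) = 1 + x := by
    simp [Finset.sum_range_succ]
  rw [h2] at h
  have h3 : |x| ^ 2 * (((Nat.succ 2 : ℕ) : ℝ) / ((Nat.factorial 2 : ℕ) * (2:ℕ))) = x ^ 2 * (3/4) := by
    rw [sq_abs]; norm_num [Nat.factorial]
  rw [h3] at h
  have := (abs_le.mp h).2
  nlinarith [sq_nonneg x]

lemma integrable_exp_mul_of_bounded {Ω : Type*} [MeasurableSpace Ω] {P : Measure Ω}
    [IsProbabilityMeasure P] {X : Ω → ℝ} (hX : Measurable X) {b : ℝ} (t : ℝ)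
    (hbd : ∀ᵐ ω ∂P, |X ω| ≤ b) :
    Integrable (fun ω => Real.exp (t * X ω)) P := by
  refine Integrable.mono' (integrable_const (Real.exp (|t| * b)))
    ((hX.const_mul t).exp.aestronglyMeasurable) ?_
  filter_upwards [hbd] with ω hω
  rw [Real.norm_eq_abs, abs_of_pos (Real.exp_pos _)]
  apply Real.exp_le_exp.mpr
  calc t * X ω ≤ |t * X ω| := le_abs_self _
    _ = |t| * |X ω| := abs_mul _ _
    _ ≤ |t| * b := by
        apply mul_le_mul_of_nonneg_left hω (abs_nonneg t)

lemma mgf_le_of_bounded {Ω : Type*} [MeasurableSpace Ω] {P : Measure Ω}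
    [IsProbabilityMeasure P] {X : Ω → ℝ} (hX : Measurable X) {b t : ℝ} (hb : 0 ≤ b)
    (hbd : ∀ᵐ ω ∂P, |X ω| ≤ b) (hmean : ∫ ω, X ω ∂P = 0)
    (ht : |t| * b ≤ 1) :
    mgf X P t ≤ Real.exp (t ^ 2 * b ^ 2) := by
  have hXint : Integrable X P := by
    refine Integrable.mono' (integrable_const b) hX.aestronglyMeasurable ?_
    filter_upwards [hbd] with ω hω; rwa [Real.norm_eq_abs]
  have hX2int : Integrable (fun ω => X ω ^ 2) P := by
    refine Integrable.mono' (integrable_const (b ^ 2)) (hX.pow_const 2).aestronglyMeasurable ?_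
    filter_upwards [hbd] with ω hω
    rw [Real.norm_eq_abs, abs_pow, sq_abs]
    rw [← sq_abs (X ω)]
    exact pow_le_pow_left₀ (abs_nonneg _) hω 2
  have hEX2 : ∫ ω, X ω ^ 2 ∂P ≤ b ^ 2 := by
    calc ∫ ω, X ω ^ 2 ∂P ≤ ∫ _, b ^ 2 ∂P := by
          refine integral_mono_ae hX2int (integrable_const _) ?_
          filter_upwards [hbd] with ω hω
          rw [← sq_abs (X ω)]
          exact pow_le_pow_left₀ (abs_nonneg _) hω 2
      _ = b ^ 2 := by simp
  have key : mgf X P t ≤ 1 + t ^ 2 * ∫ ω, X ω ^ 2 ∂P := by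
    have hint2 : Integrable (fun ω => 1 + t * X ω + t ^ 2 * X ω ^ 2) P :=
      ((integrable_const 1).add (hXint.const_mul t)).add (hX2int.const_mul (t ^ 2))
    have step : mgf X P t ≤ ∫ ω, (1 + t * X ω + t ^ 2 * X ω ^ 2) ∂P := by
      refine integral_mono_ae (integrable_exp_mul_of_bounded hX t hbd) hint2 ?_
      filter_upwards [hbd] with ω hω
      have habs : |t * X ω| ≤ 1 := by
        calc |t * X ω| = |t| * |X ω| := abs_mul _ _
          _ ≤ |t| * b := mul_le_mul_of_nonneg_left hω (abs_nonneg t)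
          _ ≤ 1 := ht
      have := exp_le_one_add_add_sq habs
      calc Real.exp (t * X ω) ≤ 1 + t * X ω + (t * X ω) ^ 2 := this
        _ = 1 + t * X ω + t ^ 2 * X ω ^ 2 := by ring
    have heq : ∫ ω, (1 + t * X ω + t ^ 2 * X ω ^ 2) ∂P
        = 1 + t * (∫ ω, X ω ∂P) + t ^ 2 * ∫ ω, X ω ^ 2 ∂P := by
      have e1 := integral_add ((integrable_const 1).add (hXint.const_mul t)) (hX2int.const_mul (t ^ 2))
      have e2 := integral_add (integrable_const (1:ℝ)) (hXint.const_mul t)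
      simp only [Pi.add_apply] at e1 e2
      rw [e1, e2, integral_const, integral_const_mul, integral_const_mul]
      simp
    rw [heq, hmean] at step
    simpa using step
  calc mgf X P t ≤ 1 + t ^ 2 * ∫ ω, X ω ^ 2 ∂P := key
    _ ≤ 1 + t ^ 2 * b ^ 2 := by nlinarith [sq_nonneg t]
    _ ≤ Real.exp (t ^ 2 * b ^ 2) := by
        have := Real.add_one_le_exp (t ^ 2 * b ^ 2); linarith

lemma conc_tail {Ω : Type*} [MeasurableSpace Ω] (P : Measure Ω) [IsProbabilityMeasure P]
    (X : ℕ → Ω → ℝ) (hX : ∀ i, Measurable (X i))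
    (hind : iIndepFun X P)
    {b : ℝ} (hb : 1 ≤ b) (hbd : ∀ i, ∀ᵐ ω ∂P, |X i ω| ≤ b)
    (hmean : ∀ i, ∫ ω, X i ω ∂P = 0)
    {ρ : ℝ} (hρ : 1 / 2 < ρ) (hρ1 : ρ ≤ 1) (M : ℕ) (hM : 1 ≤ M) :
    (P {ω | (M : ℝ) ^ ρ ≤ |∑ i ∈ Finset.range M, X i ω|}).toReal ≤
      2 * Real.exp (-(M : ℝ) ^ (2 * ρ - 1) / (4 * b ^ 2)) := by
  have hb0 : (0:ℝ) < b := lt_of_lt_of_le one_pos hb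
  have hM1 : (1:ℝ) ≤ (M:ℝ) := by exact_mod_cast hM
  have hM0 : (0:ℝ) < (M:ℝ) := lt_of_lt_of_le one_pos hM1
  set t : ℝ := (M : ℝ) ^ (ρ - 1) / (2 * b ^ 2) with htdef
  have hu1 : (M:ℝ) ^ (ρ - 1) ≤ 1 :=
    Real.rpow_le_one_of_one_le_of_nonpos hM1 (by linarith)
  have hu0 : 0 < (M:ℝ) ^ (ρ - 1) := Real.rpow_pos_of_pos hM0 _
  have ht0 : 0 < t := div_pos hu0 (by positivity)
  have htb : |t| * b ≤ 1 := by
    rw [abs_of_pos ht0]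
    rw [div_mul_eq_mul_div, div_le_one (by positivity)]
    nlinarith
  have htb' : |(-t)| * b ≤ 1 := by rwa [abs_neg]
  -- mgf of the sum
  have hmgf : ∀ s : ℝ, |s| * b ≤ 1 →
      mgf (∑ i ∈ Finset.range M, X i) P s ≤ Real.exp ((M:ℝ) * (s ^ 2 * b ^ 2)) := by
    intro s hs
    rw [iIndepFun.mgf_sum hind hX]
    calc ∏ i ∈ Finset.range M, mgf (X i) P s
        ≤ ∏ _i ∈ Finset.range M, Real.exp (s ^ 2 * b ^ 2) :=
          Finset.prod_le_prod (fun i _ => mgf_nonneg)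
            (fun i _ => mgf_le_of_bounded (hX i) hb0.le (hbd i) (hmean i) hs)
      _ = Real.exp (s ^ 2 * b ^ 2) ^ M := by rw [Finset.prod_const, Finset.card_range]
      _ = Real.exp ((M:ℝ) * (s ^ 2 * b ^ 2)) := by rw [← Real.exp_nat_mul]
  have hint : ∀ s : ℝ, Integrable (fun ω => Real.exp (s * (∑ i ∈ Finset.range M, X i) ω)) P := by
    intro s
    refine iIndepFun.integrable_exp_mul_sum hind hX (fun i _ => ?_)
    exact integrable_exp_mul_of_bounded (hX i) s (hbd i)
  -- exponent computation
  have hexp : -t * (M:ℝ) ^ ρ + (M:ℝ) * (t ^ 2 * b ^ 2) = -(M : ℝ) ^ (2 * ρ - 1) / (4 * b ^ 2) := by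
    have e1 : (M:ℝ) ^ (ρ - 1) * (M:ℝ) ^ ρ = (M:ℝ) ^ (2 * ρ - 1) := by
      rw [← Real.rpow_add hM0]; ring_nf
    have e2 : (M:ℝ) * ((M:ℝ) ^ (ρ - 1) * (M:ℝ) ^ (ρ - 1)) = (M:ℝ) ^ (2 * ρ - 1) := by
      rw [← Real.rpow_add hM0]
      nth_rewrite 1 [← Real.rpow_one (M:ℝ)]
      rw [← Real.rpow_add hM0]
      ring_nf
    calc -t * (M:ℝ) ^ ρ + (M:ℝ) * (t ^ 2 * b ^ 2)
        = -((M:ℝ) ^ (ρ - 1) * (M:ℝ) ^ ρ) / (2 * b ^ 2) +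
            ((M:ℝ) * ((M:ℝ) ^ (ρ - 1) * (M:ℝ) ^ (ρ - 1))) / (4 * b ^ 2) := by
          rw [htdef]; field_simp; ring
      _ = -(M : ℝ) ^ (2 * ρ - 1) / (2 * b ^ 2) + (M : ℝ) ^ (2 * ρ - 1) / (4 * b ^ 2) := by
          rw [e1, e2]
      _ = -(M : ℝ) ^ (2 * ρ - 1) / (4 * b ^ 2) := by field_simp; ring
  -- upper tail
  have hup : (P {ω | (M:ℝ) ^ ρ ≤ (∑ i ∈ Finset.range M, X i) ω}).toReal ≤
      Real.exp (-(M : ℝ) ^ (2 * ρ - 1) / (4 * b ^ 2)) := by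
    calc (P {ω | (M:ℝ) ^ ρ ≤ (∑ i ∈ Finset.range M, X i) ω}).toReal
        ≤ Real.exp (-t * (M:ℝ) ^ ρ) * mgf (∑ i ∈ Finset.range M, X i) P t :=
          measure_ge_le_exp_mul_mgf _ ht0.le (hint t)
      _ ≤ Real.exp (-t * (M:ℝ) ^ ρ) * Real.exp ((M:ℝ) * (t ^ 2 * b ^ 2)) := by
          exact mul_le_mul_of_nonneg_left (hmgf t htb) (Real.exp_pos _).le
      _ = Real.exp (-(M : ℝ) ^ (2 * ρ - 1) / (4 * b ^ 2)) := by
          rw [← Real.exp_add, hexp]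
  have hlo : (P {ω | (∑ i ∈ Finset.range M, X i) ω ≤ -(M:ℝ) ^ ρ}).toReal ≤
      Real.exp (-(M : ℝ) ^ (2 * ρ - 1) / (4 * b ^ 2)) := by
    calc (P {ω | (∑ i ∈ Finset.range M, X i) ω ≤ -(M:ℝ) ^ ρ}).toReal
        ≤ Real.exp (-(-t) * (-(M:ℝ) ^ ρ)) * mgf (∑ i ∈ Finset.range M, X i) P (-t) :=
          measure_le_le_exp_mul_mgf _ (by linarith) (hint (-t))
      _ ≤ Real.exp (-(-t) * (-(M:ℝ) ^ ρ)) * Real.exp ((M:ℝ) * ((-t) ^ 2 * b ^ 2)) := by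
          exact mul_le_mul_of_nonneg_left (hmgf (-t) htb') (Real.exp_pos _).le
      _ = Real.exp (-(M : ℝ) ^ (2 * ρ - 1) / (4 * b ^ 2)) := by
          rw [← Real.exp_add, ← hexp]; ring_nf
  -- union bound
  have hsub : {ω | (M : ℝ) ^ ρ ≤ |∑ i ∈ Finset.range M, X i ω|} ⊆
      {ω | (M:ℝ) ^ ρ ≤ (∑ i ∈ Finset.range M, X i) ω} ∪
      {ω | (∑ i ∈ Finset.range M, X i) ω ≤ -(M:ℝ) ^ ρ} := by
    intro ω hω
    simp only [Set.mem_setOf_eq, Finset.sum_apply, Set.mem_union] at *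
    rcases le_abs.mp hω with h | h
    · exact Or.inl h
    · exact Or.inr (by linarith)
  calc (P {ω | (M : ℝ) ^ ρ ≤ |∑ i ∈ Finset.range M, X i ω|}).toReal
      ≤ ((P {ω | (M:ℝ) ^ ρ ≤ (∑ i ∈ Finset.range M, X i) ω}) +
          P {ω | (∑ i ∈ Finset.range M, X i) ω ≤ -(M:ℝ) ^ ρ}).toReal := by
        apply ENNReal.toReal_mono
        · exact ENNReal.add_ne_top.mpr ⟨measure_ne_top _ _, measure_ne_top _ _⟩
        · exact le_trans (measure_mono hsub) (measure_union_le _ _)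
    _ = (P {ω | (M:ℝ) ^ ρ ≤ (∑ i ∈ Finset.range M, X i) ω}).toReal +
        (P {ω | (∑ i ∈ Finset.range M, X i) ω ≤ -(M:ℝ) ^ ρ}).toReal :=
        ENNReal.toReal_add (measure_ne_top _ _) (measure_ne_top _ _)
    _ ≤ 2 * Real.exp (-(M : ℝ) ^ (2 * ρ - 1) / (4 * b ^ 2)) := by linarith

lemma summable_tail {b ρ : ℝ} (hb : 1 ≤ b) (hρ : 1 / 2 < ρ) :
    Summable (fun M : ℕ => 2 * Real.exp (-((M + 1 : ℕ) : ℝ) ^ (2 * ρ - 1) / (4 * b ^ 2))) := by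
  have hb0 : (0:ℝ) < b := lt_of_lt_of_le one_pos hb
  set δ : ℝ := 2 * ρ - 1 with hδdef
  have hδ0 : 0 < δ := by rw [hδdef]; linarith
  set k : ℕ := ⌈2 / δ⌉₊ with hkdef
  have hk : 2 / δ ≤ (k:ℝ) := Nat.le_ceil _
  have hδk : (2:ℝ) ≤ δ * k := by
    rw [div_le_iff₀ hδ0] at hk; linarith
  set Kc : ℝ := (Nat.factorial k : ℝ) * (4 * b ^ 2) ^ k with hKdef
  have hK0 : 0 < Kc := by positivity
  have hcomp : ∀ M : ℕ, 2 * Real.exp (-((M + 1 : ℕ) : ℝ) ^ δ / (4 * b ^ 2)) ≤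
      (2 * Kc) * ((M + 1 : ℕ) : ℝ) ^ (-2 : ℝ) := by
    intro M
    set x : ℝ := ((M + 1 : ℕ) : ℝ) with hxdef
    have hx1 : (1:ℝ) ≤ x := by rw [hxdef]; exact_mod_cast Nat.one_le_iff_ne_zero.mpr (Nat.succ_ne_zero M)
    have hx0 : (0:ℝ) < x := lt_of_lt_of_le one_pos hx1
    set y : ℝ := x ^ δ / (4 * b ^ 2) with hydef
    have hy0 : 0 < y := div_pos (Real.rpow_pos_of_pos hx0 _) (by positivity)
    have hexp : y ^ k / (Nat.factorial k : ℝ) ≤ Real.exp y := by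
      calc y ^ k / (Nat.factorial k : ℝ)
          ≤ ∑ i ∈ Finset.range (k + 1), y ^ i / (Nat.factorial i : ℝ) := by
            refine Finset.single_le_sum (f := fun i => y ^ i / (Nat.factorial i : ℝ))
              (fun i _ => by positivity) (Finset.self_mem_range_succ k)
        _ ≤ Real.exp y := Real.sum_le_exp_of_nonneg hy0.le _
    have hyk : y ^ k = x ^ (δ * k) / (4 * b ^ 2) ^ k := by
      rw [hydef, div_pow, ← Real.rpow_natCast (x ^ δ) k, ← Real.rpow_mul hx0.le]
    have hxineq : x ^ (2:ℝ) ≤ x ^ (δ * k) := Real.rpow_le_rpow_of_exponent_le hx1 hδk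
    have hexpneg : Real.exp (-y) ≤ Kc * x ^ (-2 : ℝ) := by
      rw [Real.exp_neg]
      have h1 : y ^ k / (Nat.factorial k : ℝ) > 0 := by positivity
      have h2 : (Real.exp y)⁻¹ ≤ (y ^ k / (Nat.factorial k : ℝ))⁻¹ :=
        inv_anti₀ h1 hexp
      refine h2.trans ?_
      rw [hyk]
      rw [Real.rpow_neg hx0.le]
      rw [inv_div, div_div_eq_mul_div, div_le_iff₀ (Real.rpow_pos_of_pos hx0 _)]
      calc (Nat.factorial k : ℝ) * (4 * b ^ 2) ^ k
          = Kc := by rw [hKdef]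
        _ ≤ Kc * (x ^ (2:ℝ))⁻¹ * x ^ (δ * k) := by
            rw [mul_assoc]
            nth_rewrite 1 [← mul_one Kc]
            refine mul_le_mul_of_nonneg_left ?_ hK0.le
            rw [inv_mul_eq_div]
            exact (one_le_div (by positivity)).mpr hxineq
        _ = Kc * (x ^ (2:ℝ))⁻¹ * x ^ (δ * k) := rfl
    have : -x ^ δ / (4 * b ^ 2) = -y := by rw [hydef]; ring
    rw [this]
    calc 2 * Real.exp (-y) ≤ 2 * (Kc * x ^ (-2:ℝ)) :=
          mul_le_mul_of_nonneg_left hexpneg (by norm_num)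
      _ = (2 * Kc) * x ^ (-2:ℝ) := by ring
  refine Summable.of_nonneg_of_le (fun M => by positivity) hcomp ?_
  have hs : Summable (fun n : ℕ => ((n:ℝ)) ^ (-2 : ℝ)) :=
    Real.summable_nat_rpow.mpr (by norm_num)
  have hs1 : Summable (fun M : ℕ => (((M + 1 : ℕ)):ℝ) ^ (-2 : ℝ)) := by
    exact_mod_cast (summable_nat_add_iff 1).mpr hs
  exact hs1.mul_left _

lemma conc_as {Ω : Type*} [MeasurableSpace Ω] (P : Measure Ω) [IsProbabilityMeasure P]
    (X : ℕ → Ω → ℝ) (hX : ∀ i, Measurable (X i))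
    (hind : iIndepFun X P)
    {b : ℝ} (hb : 1 ≤ b) (hbd : ∀ i, ∀ᵐ ω ∂P, |X i ω| ≤ b)
    (hmean : ∀ i, ∫ ω, X i ω ∂P = 0)
    {ρ : ℝ} (hρ : 1 / 2 < ρ) (hρ1 : ρ ≤ 1) :
    ∀ᵐ ω ∂P, ∃ c : ℝ, ∀ M : ℕ, 1 ≤ M →
      |∑ i ∈ Finset.range M, X i ω| ≤ c * (M : ℝ) ^ ρ := by
  have hb0 : (0:ℝ) < b := lt_of_lt_of_le one_pos hb
  set p : ℕ → Ω → Prop :=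
    fun M ω => ((M + 1 : ℕ) : ℝ) ^ ρ ≤ |∑ i ∈ Finset.range (M + 1), X i ω| with hpdef
  have hsum : ∑' M : ℕ, P {ω | p M ω} ≠ ⊤ := by
    apply ne_of_lt
    have hle : ∀ M : ℕ, P {ω | p M ω} ≤
        ENNReal.ofReal (2 * Real.exp (-((M + 1 : ℕ) : ℝ) ^ (2 * ρ - 1) / (4 * b ^ 2))) := by
      intro M
      rw [ENNReal.le_ofReal_iff_toReal_le (measure_ne_top _ _) (by positivity)]
      exact conc_tail P X hX hind hb hbd hmean hρ hρ1 (M + 1) (Nat.le_add_left 1 M)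
    calc ∑' M : ℕ, P {ω | p M ω}
        ≤ ∑' M : ℕ, ENNReal.ofReal
            (2 * Real.exp (-((M + 1 : ℕ) : ℝ) ^ (2 * ρ - 1) / (4 * b ^ 2))) :=
          ENNReal.tsum_le_tsum hle
      _ = ENNReal.ofReal (∑' M : ℕ,
            (2 * Real.exp (-((M + 1 : ℕ) : ℝ) ^ (2 * ρ - 1) / (4 * b ^ 2)))) :=
          (ENNReal.ofReal_tsum_of_nonneg (fun M => by positivity) (summable_tail hb hρ)).symm
      _ < ⊤ := ENNReal.ofReal_lt_top
  have hBC := measure_setOf_frequently_eq_zero (μ := P) hsum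
  have hae : ∀ᵐ ω ∂P, ∀ᶠ M : ℕ in Filter.atTop, ¬ p M ω := by
    rw [ae_iff]
    simpa only [Filter.not_eventually, not_not] using hBC
  have hbdall : ∀ᵐ ω ∂P, ∀ i, |X i ω| ≤ b := ae_all_iff.mpr hbd
  filter_upwards [hae, hbdall] with ω hω hbω
  obtain ⟨N, hN⟩ := Filter.eventually_atTop.mp hω
  refine ⟨(N : ℝ) * b + 1, fun M hM => ?_⟩
  have hM1 : (1:ℝ) ≤ (M:ℝ) := by exact_mod_cast hM
  have hMρ : (1:ℝ) ≤ (M:ℝ) ^ ρ := Real.one_le_rpow hM1 (by linarith)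
  have hc1 : (1:ℝ) ≤ (N : ℝ) * b + 1 := by
    have h0 : 0 ≤ (N:ℝ) * b := by positivity
    linarith
  by_cases hcase : N + 1 ≤ M
  · have h := hN (M - 1) (by omega)
    rw [hpdef] at h
    simp only [Nat.sub_add_cancel hM] at h
    push_neg at h
    calc |∑ i ∈ Finset.range M, X i ω| ≤ (M:ℝ) ^ ρ := h.le
      _ ≤ ((N : ℝ) * b + 1) * (M:ℝ) ^ ρ := by nlinarith [Real.rpow_pos_of_pos (lt_of_lt_of_le one_pos hM1) ρ]
  · have hMN : M ≤ N := by omega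
    calc |∑ i ∈ Finset.range M, X i ω|
        ≤ ∑ i ∈ Finset.range M, |X i ω| := Finset.abs_sum_le_sum_abs _ _
      _ ≤ ∑ _i ∈ Finset.range M, b := Finset.sum_le_sum (fun i _ => hbω i)
      _ = (M:ℝ) * b := by rw [Finset.sum_const, Finset.card_range]; ring
      _ ≤ (N:ℝ) * b := by
          have : (M:ℝ) ≤ (N:ℝ) := by exact_mod_cast hMN
          nlinarith
      _ ≤ ((N : ℝ) * b + 1) * (M:ℝ) ^ ρ := by nlinarith [Nat.cast_nonneg (α := ℝ) N]

lemma abs_integral_le {α : Type*} [MeasurableSpace α] {μ : Measure α} (f : α → ℝ) :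
    |∫ x, f x ∂μ| ≤ ∫ x, |f x| ∂μ := by
  simpa [Real.norm_eq_abs] using norm_integral_le_integral_norm (μ := μ) f

set_option maxHeartbeats 1000000 in
/-- Theorem 1, first inequality: under A.1, A.2, A.3, for every
bounded measurable `f` (with `|f| ≤ F` on `S`) and every `0 < υ < 1/2` there
exist a positive, almost surely finite random variable `W_{f,υ}` independent
of `M` and `ε`, and the finite constant `C = 2F/∫_S h`, such that almost
surely, for every `M ≥ 1`,
`|(f, π^{M,ε}) − (f, π)| ≤ W_{f,υ} / M^(1/2 − υ) + C ε`, where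
`(f, π^{M,ε}) = Σ_i f(θ^(i)) g^ε(θ^(i)) / Σ_j g^ε(θ^(j))`, the target is
`π = h/∫_S h`, the weight function is `g = h/q`, and the samples `θ^(i)` are
i.i.d. with common density `q` on `S`. -/
theorem npmc_approximate_weights_bound {K : ℕ} {Ω : Type*} [MeasurableSpace Ω]
    (P : Measure Ω) [IsProbabilityMeasure P]
    (S : Set (Fin K → ℝ)) (hS : MeasurableSet S)
    (q h : (Fin K → ℝ) → ℝ)
    (hq : Measurable q) (hqpos : ∀ θ ∈ S, 0 < q θ)
    (hq1 : (∫ θ in S, q θ) = 1)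
    (hh : Measurable h) (hhpos : ∀ θ ∈ S, 0 < h θ)
    (hhint : IntegrableOn h S) (hhI : 0 < ∫ θ in S, h θ)
    (ε : ℝ) (hε : 0 ≤ ε)
    (gε : (Fin K → ℝ) → ℝ) (hgε : Measurable gε)
    (hA1 : ∀ θ ∈ S, |h θ / q θ - gε θ| ≤ ε)
    (a : ℝ) (ha : 0 < a)
    (hA2 : ∀ θ ∈ S, a⁻¹ ≤ h θ / q θ ∧ h θ / q θ ≤ a)
    (hA3 : ∀ θ ∈ S, a⁻¹ ≤ gε θ ∧ gε θ ≤ a)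
    (θs : ℕ → Ω → (Fin K → ℝ)) (hθmeas : ∀ i, Measurable (θs i))
    (hindep : iIndepFun θs P)
    (hlaw : ∀ i, Measure.map (θs i) P =
      (volume.restrict S).withDensity (fun x => ENNReal.ofReal (q x)))
    (f : (Fin K → ℝ) → ℝ) (hf : Measurable f)
    (F : ℝ) (hF : 0 ≤ F) (hfb : ∀ θ ∈ S, |f θ| ≤ F)
    (υ : ℝ) (hυ0 : 0 < υ) (hυ : υ < 1 / 2) :
    ∃ W : Ω → ℝ, Measurable W ∧ (∀ ω, 0 < W ω) ∧
      ∀ᵐ ω ∂P, ∀ M : ℕ, 1 ≤ M →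
        |(∑ i ∈ Finset.range M, f (θs i ω) * gε (θs i ω)) /
            (∑ i ∈ Finset.range M, gε (θs i ω)) -
          ∫ x in S, f x * (h x / ∫ y in S, h y)| ≤
          W ω / (M : ℝ) ^ ((1 : ℝ) / 2 - υ) + (2 * F / ∫ x in S, h x) * ε := by
  -- basic quantities
  set I : ℝ := ∫ y in S, h y with hIdef
  set B : ℝ := ∫ x in S, gε x * q x with hBdef
  set A : ℝ := ∫ x in S, f x * gε x * q x with hAdef
  set A' : ℝ := ∫ x in S, f x * h x with hA'def
  -- integrability of q
  have hqint : IntegrableOn q S := by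
    by_contra hc
    rw [integral_undef hc] at hq1
    exact one_ne_zero hq1.symm
  -- helper: integrability of bounded * q on S
  have hintq : ∀ (φ : (Fin K → ℝ) → ℝ), Measurable φ → ∀ C : ℝ, (∀ x ∈ S, |φ x| ≤ C) →
      IntegrableOn (fun x => φ x * q x) S := by
    intro φ hφ C hC
    refine Integrable.mono' (hqint.const_mul C) ((hφ.mul hq).aestronglyMeasurable) ?_
    filter_upwards [ae_restrict_mem hS] with x hx
    rw [Real.norm_eq_abs, abs_mul, abs_of_pos (hqpos x hx)]
    exact mul_le_mul_of_nonneg_right (hC x hx) (hqpos x hx).le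
  -- expectation formula
  have hgabs : ∀ x ∈ S, |gε x| ≤ a := fun x hx =>
    abs_le.mpr ⟨by linarith [(hA3 x hx).1, inv_pos.mpr ha], (hA3 x hx).2⟩
  have hE : ∀ (φ : (Fin K → ℝ) → ℝ), Measurable φ → ∀ i : ℕ,
      ∫ ω, φ (θs i ω) ∂P = ∫ x in S, φ x * q x := by
    intro φ hφ i
    have h1 : ∫ ω, φ (θs i ω) ∂P = ∫ x, φ x ∂(Measure.map (θs i) P) :=
      (integral_map (hθmeas i).aemeasurable hφ.aestronglyMeasurable).symm
    rw [h1, hlaw i]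
    have h2 : (fun x => ENNReal.ofReal (q x)) = (fun x => ((q x).toNNReal : ENNReal)) := rfl
    rw [h2, integral_withDensity_eq_integral_smul hq.real_toNNReal φ]
    refine integral_congr_ae ?_
    filter_upwards [ae_restrict_mem hS] with x hx
    rw [NNReal.smul_def, Real.coe_toNNReal _ (hqpos x hx).le, smul_eq_mul, mul_comm]
  -- a.e. membership in S
  have hmemS : ∀ i, ∀ᵐ ω ∂P, θs i ω ∈ S := by
    intro i
    have h1 : P (θs i ⁻¹' Sᶜ) =
        ((volume.restrict S).withDensity fun x => ENNReal.ofReal (q x)) Sᶜ := by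
      rw [← hlaw i, Measure.map_apply (hθmeas i) hS.compl]
    have h0 : P (θs i ⁻¹' Sᶜ) = 0 := by
      rw [h1, withDensity_apply _ hS.compl, Measure.restrict_restrict hS.compl,
        Set.compl_inter_self, Measure.restrict_empty, lintegral_zero_measure]
    refine (ae_iff).mpr ?_
    exact h0
  -- pointwise facts on S
  have hq0 : ∀ x ∈ S, q x ≠ 0 := fun x hx => (hqpos x hx).ne'
  have hgq : ∀ x ∈ S, |gε x * q x - h x| ≤ ε * q x := by
    intro x hx
    have : gε x * q x - h x = (gε x - h x / q x) * q x := by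
      rw [sub_mul, div_mul_cancel₀ _ (hq0 x hx)]
    rw [this, abs_mul, abs_of_pos (hqpos x hx), abs_sub_comm]
    exact mul_le_mul_of_nonneg_right (hA1 x hx) (hqpos x hx).le
  -- integral estimates
  have hgεint : IntegrableOn (fun x => gε x * q x) S := hintq gε hgε a hgabs
  have hfgεint : IntegrableOn (fun x => f x * gε x * q x) S := by
    refine hintq (fun x => f x * gε x) (hf.mul hgε) (F * a) (fun x hx => ?_)
    rw [abs_mul]
    exact mul_le_mul (hfb x hx) (hgabs x hx) (abs_nonneg _) hF
  have hfhint : IntegrableOn (fun x => f x * h x) S := by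
    refine Integrable.mono' (hhint.const_mul F) ((hf.mul hh).aestronglyMeasurable) ?_
    filter_upwards [ae_restrict_mem hS] with x hx
    rw [Real.norm_eq_abs, abs_mul, abs_of_pos (hhpos x hx)]
    exact mul_le_mul_of_nonneg_right (hfb x hx) (hhpos x hx).le
  have hB_lb : a⁻¹ ≤ B := by
    have hmono : ∫ x in S, a⁻¹ * q x ≤ ∫ x in S, gε x * q x := by
      refine setIntegral_mono_on (hintq (fun _ => a⁻¹) measurable_const a⁻¹
        (fun x _ => le_of_eq (abs_of_pos (inv_pos.mpr ha)))) hgεint hS (fun x hx => ?_)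
      exact mul_le_mul_of_nonneg_right (hA3 x hx).1 (hqpos x hx).le
    rwa [integral_const_mul, hq1, mul_one] at hmono
  have hB_ub : B ≤ a := by
    have hmono : ∫ x in S, gε x * q x ≤ ∫ x in S, a * q x := by
      refine setIntegral_mono_on hgεint (hintq (fun _ => a) measurable_const a
        (fun x _ => le_of_eq (abs_of_pos ha))) hS (fun x hx => ?_)
      exact mul_le_mul_of_nonneg_right (hA3 x hx).2 (hqpos x hx).le
    rwa [integral_const_mul, hq1, mul_one] at hmono
  have hB0 : 0 < B := lt_of_lt_of_le (inv_pos.mpr ha) hB_lb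
  have hAbound : |A| ≤ F * B := by
    calc |A| ≤ ∫ x in S, |f x * gε x * q x| := by
          rw [hAdef]; exact abs_integral_le _
      _ ≤ ∫ x in S, F * (gε x * q x) := by
          refine setIntegral_mono_on hfgεint.abs (hgεint.const_mul F) hS (fun x hx => ?_)
          have hgpos := lt_of_lt_of_le (inv_pos.mpr ha) (hA3 x hx).1
          rw [abs_mul, abs_mul, abs_of_pos (hqpos x hx), abs_of_pos hgpos,
            show |f x| * gε x * q x = |f x| * (gε x * q x) from by ring]
          exact mul_le_mul_of_nonneg_right (hfb x hx)
            (mul_nonneg hgpos.le (hqpos x hx).le)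
      _ = F * B := by rw [integral_const_mul]
  have hAa : |A| ≤ F * a := hAbound.trans (mul_le_mul_of_nonneg_left hB_ub hF)
  have hBI : |B - I| ≤ ε := by
    have hsub : B - I = ∫ x in S, (gε x * q x - h x) := (integral_sub hgεint hhint).symm
    calc |B - I| ≤ ∫ x in S, |gε x * q x - h x| := by
          rw [hsub]; exact abs_integral_le _
      _ ≤ ∫ x in S, ε * q x := by
          refine setIntegral_mono_on (hgεint.sub hhint).abs (hqint.const_mul ε) hS
            (fun x hx => hgq x hx)
      _ = ε := by rw [integral_const_mul, hq1, mul_one]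
  have hAA' : |A - A'| ≤ F * ε := by
    have hsub : A - A' = ∫ x in S, (f x * gε x * q x - f x * h x) :=
      (integral_sub hfgεint hfhint).symm
    calc |A - A'| ≤ ∫ x in S, |f x * gε x * q x - f x * h x| := by
          rw [hsub]; exact abs_integral_le _
      _ ≤ ∫ x in S, F * (ε * q x) := by
          refine setIntegral_mono_on (hfgεint.sub hfhint).abs
            ((hqint.const_mul ε).const_mul F) hS (fun x hx => ?_)
          have : f x * gε x * q x - f x * h x = f x * (gε x * q x - h x) := by ring
          rw [this, abs_mul]
          exact mul_le_mul (hfb x hx) (hgq x hx) (abs_nonneg _) hF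
      _ = F * ε := by rw [integral_const_mul, integral_const_mul, hq1, mul_one]
  have hA'bound : |A'| ≤ F * I := by
    calc |A'| ≤ ∫ x in S, |f x * h x| := by
          rw [hA'def]; exact abs_integral_le _
      _ ≤ ∫ x in S, F * h x := by
          refine setIntegral_mono_on hfhint.abs (hhint.const_mul F) hS (fun x hx => ?_)
          rw [abs_mul, abs_of_pos (hhpos x hx)]
          exact mul_le_mul_of_nonneg_right (hfb x hx) (hhpos x hx).le
      _ = F * I := by rw [integral_const_mul]
  -- step A : deterministic bias bound
  have hbias : |A / B - A' / I| ≤ 2 * F / I * ε := by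
    have hid : A / B - A' / I = (A - A') / I + A / B * ((I - B) / I) := by
      field_simp
      ring
    have h1 : |A / B| ≤ F := by
      rw [abs_div, abs_of_pos hB0, div_le_iff₀ hB0]
      exact hAbound
    calc |A / B - A' / I| = |(A - A') / I + A / B * ((I - B) / I)| := by rw [hid]
      _ ≤ |(A - A') / I| + |A / B * ((I - B) / I)| := abs_add_le _ _
      _ = |A - A'| / I + |A / B| * (|I - B| / I) := by
          rw [abs_mul]
          rw [abs_div (A - A'), abs_div (I - B), abs_of_pos hhI]
      _ ≤ F * ε / I + F * (ε / I) := by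
          have h2 : |I - B| / I ≤ ε / I := by
            rw [abs_sub_comm]
            gcongr
          have h3 : |A - A'| / I ≤ F * ε / I := by gcongr
          have h4 : |A / B| * (|I - B| / I) ≤ F * (ε / I) :=
            mul_le_mul h1 h2 (by positivity) hF
          linarith
      _ = 2 * F / I * ε := by field_simp; ring
  -- the centered random variables
  set ρ : ℝ := 1 / 2 + υ with hρdef
  have hρhalf : 1 / 2 < ρ := by rw [hρdef]; linarith
  have hρ1 : ρ ≤ 1 := by rw [hρdef]; linarith
  set b : ℝ := 2 * F * a + 2 * a + 1 with hbdef
  have hb1 : 1 ≤ b := by nlinarith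
  set Y : ℕ → Ω → ℝ := fun i ω => f (θs i ω) * gε (θs i ω) - A with hYdef
  set Z : ℕ → Ω → ℝ := fun i ω => gε (θs i ω) - B with hZdef
  have hYmeas : ∀ i, Measurable (Y i) := fun i =>
    ((hf.comp (hθmeas i)).mul (hgε.comp (hθmeas i))).sub measurable_const
  have hZmeas : ∀ i, Measurable (Z i) := fun i =>
    (hgε.comp (hθmeas i)).sub measurable_const
  have hYind : iIndepFun Y P :=
    hindep.comp (fun _ x => f x * gε x - A) (fun _ => (hf.mul hgε).sub measurable_const)
  have hZind : iIndepFun Z P :=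
    hindep.comp (fun _ x => gε x - B) (fun _ => hgε.sub measurable_const)
  have hYbd : ∀ i, ∀ᵐ ω ∂P, |Y i ω| ≤ b := by
    intro i
    filter_upwards [hmemS i] with ω hω
    have h1 : |f (θs i ω) * gε (θs i ω)| ≤ F * a := by
      rw [abs_mul]
      exact mul_le_mul (hfb _ hω) (hgabs _ hω) (abs_nonneg _) hF
    calc |Y i ω| ≤ |f (θs i ω) * gε (θs i ω)| + |A| := by
          rw [hYdef]; simp only
          rw [sub_eq_add_neg]
          exact (abs_add_le _ _).trans_eq (by rw [abs_neg])
      _ ≤ F * a + F * a := add_le_add h1 hAa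
      _ ≤ b := by rw [hbdef]; nlinarith
  have hZbd : ∀ i, ∀ᵐ ω ∂P, |Z i ω| ≤ b := by
    intro i
    filter_upwards [hmemS i] with ω hω
    have h1 : |gε (θs i ω)| ≤ a := hgabs _ hω
    have h2 : |B| ≤ a := by rw [abs_of_pos hB0]; exact hB_ub
    calc |Z i ω| ≤ |gε (θs i ω)| + |B| := by
          rw [hZdef]; simp only
          rw [sub_eq_add_neg]
          exact (abs_add_le _ _).trans_eq (by rw [abs_neg])
      _ ≤ a + a := add_le_add h1 h2
      _ ≤ b := by rw [hbdef]; nlinarith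
  have hYint : ∀ i, Integrable (fun ω => f (θs i ω) * gε (θs i ω)) P := by
    intro i
    refine Integrable.mono' (integrable_const (F * a))
      ((hf.comp (hθmeas i)).mul (hgε.comp (hθmeas i))).aestronglyMeasurable ?_
    filter_upwards [hmemS i] with ω hω
    rw [Real.norm_eq_abs, abs_mul]
    exact mul_le_mul (hfb _ hω) (hgabs _ hω) (abs_nonneg _) hF
  have hZint : ∀ i, Integrable (fun ω => gε (θs i ω)) P := by
    intro i
    refine Integrable.mono' (integrable_const a)
      (hgε.comp (hθmeas i)).aestronglyMeasurable ?_
    filter_upwards [hmemS i] with ω hω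
    rw [Real.norm_eq_abs]
    exact hgabs _ hω
  have hYmean : ∀ i, ∫ ω, Y i ω ∂P = 0 := by
    intro i
    rw [hYdef]
    simp only
    rw [integral_sub (hYint i) (integrable_const A), integral_const]
    simp [hE (fun x => f x * gε x) (hf.mul hgε) i, hAdef]
  have hZmean : ∀ i, ∫ ω, Z i ω ∂P = 0 := by
    intro i
    rw [hZdef]
    simp only
    rw [integral_sub (hZint i) (integrable_const B), integral_const]
    simp [hE gε hgε i, hBdef]
  have hYas := conc_as P Y hYmeas hYind hb1 hYbd hYmean hρhalf hρ1
  have hZas := conc_as P Z hZmeas hZind hb1 hZbd hZmean hρhalf hρ1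
  have hmemSall : ∀ᵐ ω ∂P, ∀ i, θs i ω ∈ S := ae_all_iff.mpr hmemS
  -- the random variable W
  set num : ℕ → Ω → ℝ := fun M ω =>
    a * (|∑ i ∈ Finset.range M, Y i ω| + F * |∑ i ∈ Finset.range M, Z i ω|) with hnumdef
  have hnum_nonneg : ∀ M ω, 0 ≤ num M ω := fun M ω => by positivity
  have hnummeas : ∀ M : ℕ, Measurable (fun ω => num M ω / (M : ℝ) ^ ρ) := by
    intro M
    apply Measurable.div_const
    apply Measurable.const_mul
    exact ((Finset.measurable_sum _ (fun i _ => hYmeas i)).abs.add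
      ((Finset.measurable_sum _ (fun i _ => hZmeas i)).abs.const_mul F))
  set W : Ω → ℝ := fun ω =>
    (⨆ M : ℕ, ENNReal.ofReal (num M ω / (M : ℝ) ^ ρ)).toReal + 1 with hWdef
  refine ⟨W, ?_, ?_, ?_⟩
  · apply Measurable.add_const
    apply ENNReal.measurable_toReal.comp
    exact Measurable.iSup (fun M => (hnummeas M).ennreal_ofReal)
  · intro ω
    have : 0 ≤ (⨆ M : ℕ, ENNReal.ofReal (num M ω / (M : ℝ) ^ ρ)).toReal := ENNReal.toReal_nonneg
    rw [hWdef]; simp only; linarith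
  filter_upwards [hYas, hZas, hmemSall] with ω hYω hZω hSω
  obtain ⟨cY, hcY⟩ := hYω
  obtain ⟨cZ, hcZ⟩ := hZω
  -- the sup is finite
  have hsupfin : (⨆ M : ℕ, ENNReal.ofReal (num M ω / (M : ℝ) ^ ρ)) ≠ ⊤ := by
    refine ne_of_lt (lt_of_le_of_lt (iSup_le fun M => ?_)
      (ENNReal.ofReal_lt_top : ENNReal.ofReal (a * (|cY| + F * |cZ|) + 1) < ⊤))
    apply ENNReal.ofReal_le_ofReal
    rcases Nat.eq_zero_or_pos M with hM0 | hM1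
    · subst hM0
      simp [hnumdef]
      positivity
    · have hM1' : (1:ℝ) ≤ (M:ℝ) := by exact_mod_cast hM1
      have hMρ : (0:ℝ) < (M:ℝ) ^ ρ := Real.rpow_pos_of_pos (by linarith) ρ
      rw [div_le_iff₀ hMρ]
      have h1 : |∑ i ∈ Finset.range M, Y i ω| ≤ |cY| * (M:ℝ) ^ ρ :=
        (hcY M hM1).trans (mul_le_mul_of_nonneg_right (le_abs_self _) hMρ.le)
      have h2 : |∑ i ∈ Finset.range M, Z i ω| ≤ |cZ| * (M:ℝ) ^ ρ :=
        (hcZ M hM1).trans (mul_le_mul_of_nonneg_right (le_abs_self _) hMρ.le)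
      rw [hnumdef]
      simp only
      nlinarith [abs_nonneg (∑ i ∈ Finset.range M, Z i ω), hMρ.le, mul_le_mul_of_nonneg_left h2 hF]
  intro M hM
  have hM1' : (1:ℝ) ≤ (M:ℝ) := by exact_mod_cast hM
  have hM0 : (0:ℝ) < (M:ℝ) := by linarith
  have hMρ : (0:ℝ) < (M:ℝ) ^ ρ := Real.rpow_pos_of_pos hM0 ρ
  -- num M ω / M^ρ ≤ W ω
  have hWbound : num M ω / (M : ℝ) ^ ρ ≤ W ω := by
    have h1 : ENNReal.ofReal (num M ω / (M : ℝ) ^ ρ) ≤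
        (⨆ M : ℕ, ENNReal.ofReal (num M ω / (M : ℝ) ^ ρ)) :=
      le_iSup (fun N : ℕ => ENNReal.ofReal (num N ω / (N : ℝ) ^ ρ)) M
    have h2 := ENNReal.toReal_mono hsupfin h1
    rw [ENNReal.toReal_ofReal (by positivity)] at h2
    rw [hWdef]
    simp only
    linarith
  -- the sums
  set sY : ℝ := ∑ i ∈ Finset.range M, f (θs i ω) * gε (θs i ω) with hsYdef
  set sZ : ℝ := ∑ i ∈ Finset.range M, gε (θs i ω) with hsZdef
  have hYsum : ∑ i ∈ Finset.range M, Y i ω = sY - M * A := by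
    rw [hYdef, hsYdef]
    simp [Finset.sum_sub_distrib]
  have hZsum : ∑ i ∈ Finset.range M, Z i ω = sZ - M * B := by
    rw [hZdef, hsZdef]
    simp [Finset.sum_sub_distrib]
  have hsZ_lb : (M:ℝ) / a ≤ sZ := by
    rw [hsZdef]
    calc (M:ℝ) / a = ∑ _i ∈ Finset.range M, a⁻¹ := by
          rw [Finset.sum_const, Finset.card_range, nsmul_eq_mul]; field_simp
      _ ≤ ∑ i ∈ Finset.range M, gε (θs i ω) :=
          Finset.sum_le_sum (fun i _ => (hA3 _ (hSω i)).1)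
  have hsZ0 : 0 < sZ := lt_of_lt_of_le (by positivity) hsZ_lb
  -- main deterministic bound
  have hmain : |sY / sZ - A / B| ≤ num M ω / (M:ℝ) := by
    have hid : sY / sZ - A / B = ((sY - M * A) + A / B * (M * B - sZ)) / sZ := by
      field_simp
      ring
    have hAB : |A / B| ≤ F := by
      rw [abs_div, abs_of_pos hB0, div_le_iff₀ hB0]; exact hAbound
    have h3 : |sY / sZ - A / B| ≤ (|sY - M * A| + F * |sZ - M * B|) / sZ := by
      rw [hid, abs_div, abs_of_pos hsZ0]
      have hnum : |(sY - M * A) + A / B * (M * B - sZ)| ≤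
          |sY - M * A| + F * |sZ - M * B| := by
        calc |(sY - M * A) + A / B * (M * B - sZ)|
            ≤ |sY - M * A| + |A / B * (M * B - sZ)| := abs_add_le _ _
          _ = |sY - M * A| + |A / B| * |sZ - M * B| := by
              rw [abs_mul, abs_sub_comm (M * B) sZ]
          _ ≤ |sY - M * A| + F * |sZ - M * B| := by
              have := mul_le_mul_of_nonneg_right hAB (abs_nonneg (sZ - M * B))
              linarith
      gcongr
    refine h3.trans ?_
    rw [hnumdef]
    simp only
    rw [hYsum, hZsum]
    rw [div_le_div_iff₀ hsZ0 hM0]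
    have hnn : 0 ≤ |sY - M * A| + F * |sZ - M * B| := by positivity
    calc (|sY - M * A| + F * |sZ - M * B|) * M
        ≤ (|sY - M * A| + F * |sZ - M * B|) * (a * sZ) := by
          apply mul_le_mul_of_nonneg_left ?_ hnn
          rw [div_le_iff₀ ha] at hsZ_lb
          linarith [hsZ_lb]
      _ = a * (|sY - M * A| + F * |sZ - M * B|) * sZ := by ring
  -- final computation
  have hT : (∫ x in S, f x * (h x / I)) = A' / I := by
    simp_rw [mul_div_assoc']
    exact integral_div I _
  rw [hT]
  have hrate : num M ω / (M:ℝ) ≤ W ω / (M : ℝ) ^ ((1:ℝ)/2 - υ) := by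
    have hWnn : 0 ≤ W ω := by
      have : 0 ≤ (⨆ M : ℕ, ENNReal.ofReal (num M ω / (M : ℝ) ^ ρ)).toReal := ENNReal.toReal_nonneg
      rw [hWdef]; simp only; linarith
    have hnum_le : num M ω ≤ W ω * (M:ℝ) ^ ρ := (div_le_iff₀ hMρ).mp hWbound
    rw [div_le_div_iff₀ hM0 (Real.rpow_pos_of_pos hM0 _)]
    calc num M ω * (M:ℝ) ^ ((1:ℝ)/2 - υ)
        ≤ W ω * (M:ℝ) ^ ρ * (M:ℝ) ^ ((1:ℝ)/2 - υ) :=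
          mul_le_mul_of_nonneg_right hnum_le (Real.rpow_pos_of_pos hM0 _).le
      _ = W ω * (M:ℝ) := by
          rw [mul_assoc, ← Real.rpow_add hM0,
            show ρ + ((1:ℝ)/2 - υ) = 1 from by rw [hρdef]; ring, Real.rpow_one]
  calc |sY / sZ - A' / I| ≤ |sY / sZ - A / B| + |A / B - A' / I| := abs_sub_le _ _ _
    _ ≤ num M ω / (M:ℝ) + 2 * F / I * ε := add_le_add hmain hbias
    _ ≤ W ω / (M : ℝ) ^ ((1:ℝ)/2 - υ) + 2 * F / I * ε := by linarith [hrate]
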